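/- Suppose r is the nonzero Gauss remainder of nonzero a, b ∈ ℤ[i] with φ(r) ≥ φ(b) = n, Im(u_b·b)·Im(u_r·r) < 0, and min(|Re r|,|Im r|) + min(|Re b|,|Im b|) ≤ ℓ∞(r). Then φ(r - (u_b/u_r)·b) < φ(b). -/

import Mathlib

open GaussianInt

noncomputable section

/-- The sequence w: w_{2k} = 3·2^k, w_{2k+1} = 4·2^k. -/
def w (n : ℕ) : ℤ := if n % 2 = 0 then 3 * 2 ^ (n / 2) else 4 * 2 ^ (n / 2)

/-- 2-adic valuation of gcd(Re z, Im z). -/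
def v2 (z : GaussianInt) : ℕ := padicValNat 2 (Int.gcd z.re z.im)

/-- ℓ₁ norm. -/
def l1 (z : GaussianInt) : ℤ := |z.re| + |z.im|

/-- ℓ∞ norm. -/
def linf (z : GaussianInt) : ℤ := max |z.re| |z.im|

/-- m(z) = min(|Re z|, |Im z|). -/
def mm (z : GaussianInt) : ℤ := min |z.re| |z.im|

/-- The algebraic norm. -/
def Nm (z : GaussianInt) : ℤ := z.re ^ 2 + z.im ^ 2

/-- Graves' formula for the minimal Euclidean function φ on ℤ[i]. -/
def phi (z : GaussianInt) : ℕ :=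
  let j := v2 z
  let n := sInf {n : ℕ | |z.re| ≤ 2 ^ j * (w n - 2) ∧ |z.im| ≤ 2 ^ j * (w n - 2)}
  if l1 z ≤ 2 ^ j * (w (n + 1) - 3) then n + 2 * j else n + 2 * j + 1

/-- Nearest integer, rounding halves down. -/
def nint (x : ℚ) : ℤ := if x - ⌊x⌋ ≤ 1 / 2 then ⌊x⌋ else ⌈x⌉

/-- Gauss quotient: coordinatewise nearest-integer rounding of a·conj(b)/Nm(b). -/
def gq (a b : GaussianInt) : GaussianInt :=
  ⟨nint (((a.re * b.re + a.im * b.im : ℤ) : ℚ) / ((b.re ^ 2 + b.im ^ 2 : ℤ) : ℚ)),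
   nint (((a.im * b.re - a.re * b.im : ℤ) : ℚ) / ((b.re ^ 2 + b.im ^ 2 : ℤ) : ℚ))⟩

/-- Gauss remainder. -/
def gr (a b : GaussianInt) : GaussianInt := a - gq a b * b

/-- The imaginary unit in ℤ[i]. -/
def Ii : GaussianInt := ⟨0, 1⟩

/-- The canonical unit u_z. -/
def uz (z : GaussianInt) : GaussianInt :=
  if |z.re| > |z.im| then (if 0 < z.re then 1 else -1)
  else if |z.im| > |z.re| then (if 0 < z.im then -Ii else Ii)
  else if 0 < z.re then (if 0 < z.im then 1 else Ii)
  else (if 0 < z.im then -Ii else -1)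

/-- s(z) = sgn(Im(u_z·z)). -/
def sfun (z : GaussianInt) : ℤ := Int.sign ((uz z * z).im)

lemma w_even (s : ℕ) : w (2*s) = 3 * 2^s := by
  unfold w
  have h1 : (2*s) % 2 = 0 := by omega
  have h2 : (2*s) / 2 = s := by omega
  rw [h1, h2]; simp

lemma w_odd (s : ℕ) : w (2*s+1) = 4 * 2^s := by
  unfold w
  have h1 : (2*s+1) % 2 = 1 := by omega
  have h2 : (2*s+1) / 2 = s := by omega
  rw [h1, h2]; simp

lemma w_add_two (n : ℕ) : w (n+2) = 2 * w n := by
  rcases Nat.even_or_odd n with ⟨s, hs⟩ | ⟨s, hs⟩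
  · subst hs
    have : s + s + 2 = 2*(s+1) := by omega
    rw [this, w_even, show s+s = 2*s from by omega, w_even, pow_succ]; ring
  · subst hs
    have : 2*s+1+2 = 2*(s+1)+1 := by omega
    rw [this, w_odd, w_odd, pow_succ]; ring

lemma w_shift (k n : ℕ) : w (n + 2*k) = 2^k * w n := by
  induction k with
  | zero => simp
  | succ k ih =>
      have : n + 2*(k+1) = (n + 2*k) + 2 := by omega
      rw [this, w_add_two, ih, pow_succ]; ring

lemma w_succ (n : ℕ) : w (n+1) = w n + 2^((n+1)/2) := by
  rcases Nat.even_or_odd n with ⟨s, hs⟩ | ⟨s, hs⟩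
  · subst hs
    rw [show s+s = 2*s from by omega, show 2*s+1 = 2*s+1 from rfl, w_odd, w_even,
      show (2*s+1)/2 = s from by omega]
    ring
  · subst hs
    rw [show 2*s+1+1 = 2*(s+1) from by omega, w_odd, w_even]
    rw [show (2*(s+1))/2 = s+1 from by omega, pow_succ]
    ring

lemma w_mono : Monotone w := by
  apply monotone_nat_of_le_succ
  intro n
  rw [w_succ]
  have : (0:ℤ) < 2^((n+1)/2) := by positivity
  linarith

lemma w_ge (n : ℕ) : (n:ℤ) + 3 ≤ w n := by
  induction n with
  | zero => simp [w_even 0]  -- w 0 = 3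
  | succ k ih =>
      rw [w_succ]
      have : (1:ℤ) ≤ 2^((k+1)/2) := one_le_pow₀ (by norm_num)
      push_cast
      linarith

lemma w_even_val (n : ℕ) (hn : 1 ≤ n) : (2:ℤ) ∣ w n := by
  rcases Nat.even_or_odd n with ⟨s, hs⟩ | ⟨s, hs⟩
  · subst hs
    rw [show s+s = 2*s from by omega, w_even]
    have hs1 : 1 ≤ s := by omega
    rw [show s = (s-1)+1 from by omega, pow_succ]
    exact ⟨3 * 2^(s-1), by ring⟩
  · subst hs; rw [w_odd]; exact ⟨2 * 2^s, by ring⟩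

lemma w_D (m : ℕ) (hm : 1 ≤ m) : w m = w (m-1) + 2^(m/2) := by
  have := w_succ (m-1)
  rw [show m-1+1 = m from by omega] at this
  rw [this]

lemma w_2D (m : ℕ) (hm : 1 ≤ m) : 2 * 2^(m/2) ≤ w (m-1) := by
  rcases Nat.even_or_odd m with ⟨s, hs⟩ | ⟨s, hs⟩
  · have hs1 : 1 ≤ s := by omega
    rw [show m - 1 = 2*(s-1)+1 from by omega, w_odd, show m/2 = s from by omega]
    have h : (2:ℤ)^s = 2^(s-1)*2 := by rw [← pow_succ]; congr 1; omega
    have : (0:ℤ) < 2^(s-1) := by positivity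
    linarith
  · rw [show m - 1 = 2*s from by omega, w_even, show m/2 = s from by omega]
    have : (0:ℤ) < 2^s := by positivity
    linarith

lemma l1_eq (z : GaussianInt) : l1 z = linf z + mm z := by
  unfold l1 linf mm
  rcases le_total |z.re| |z.im| with h | h
  · rw [max_eq_right h, min_eq_left h]; try ring
  · rw [max_eq_left h, min_eq_right h]; try ring

lemma linf_nonneg (z : GaussianInt) : 0 ≤ linf z := le_trans (abs_nonneg _) (le_max_left _ _)

lemma mm_nonneg (z : GaussianInt) : 0 ≤ mm z := le_min (abs_nonneg _) (abs_nonneg _)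

lemma abs_le_linf (z : GaussianInt) : |z.re| ≤ linf z ∧ |z.im| ≤ linf z :=
  ⟨le_max_left _ _, le_max_right _ _⟩

lemma phi_def (z : GaussianInt) :
    phi z = if l1 z ≤ 2 ^ (v2 z) * (w ((sInf {n : ℕ | |z.re| ≤ 2 ^ (v2 z) * (w n - 2) ∧ |z.im| ≤ 2 ^ (v2 z) * (w n - 2)}) + 1) - 3)
      then (sInf {n : ℕ | |z.re| ≤ 2 ^ (v2 z) * (w n - 2) ∧ |z.im| ≤ 2 ^ (v2 z) * (w n - 2)}) + 2 * (v2 z)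
      else (sInf {n : ℕ | |z.re| ≤ 2 ^ (v2 z) * (w n - 2) ∧ |z.im| ≤ 2 ^ (v2 z) * (w n - 2)}) + 2 * (v2 z) + 1 := rfl

lemma S_mem (z : GaussianInt) :
    ∃ k, k ∈ {n : ℕ | |z.re| ≤ 2 ^ (v2 z) * (w n - 2) ∧ |z.im| ≤ 2 ^ (v2 z) * (w n - 2)} := by
  refine ⟨(linf z).toNat, ?_⟩
  constructor <;>
  · have h1 : (1:ℤ) ≤ 2 ^ (v2 z) := one_le_pow₀ (by norm_num)
    have h2 := w_ge (linf z).toNat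
    have h3 : linf z ≤ ((linf z).toNat : ℤ) := Int.self_le_toNat _
    have h5 : |z.re| ≤ linf z := (abs_le_linf z).1
    have h6 : |z.im| ≤ linf z := (abs_le_linf z).2
    have h7 : (0:ℤ) ≤ ((linf z).toNat : ℤ) + 1 := by positivity
    nlinarith

lemma le_phi0 (z : GaussianInt) : 2 * v2 z ≤ phi z := by
  rw [phi_def]; split <;> omega

lemma phi_le (z : GaussianInt) (m : ℕ) (h1 : linf z ≤ 2 ^ (v2 z) * (w m - 2))
    (h2 : l1 z ≤ 2 ^ (v2 z) * (w (m+1) - 3)) : phi z ≤ m + 2 * v2 z := by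
  have hd := phi_def z
  set N := sInf {n : ℕ | |z.re| ≤ 2 ^ (v2 z) * (w n - 2) ∧ |z.im| ≤ 2 ^ (v2 z) * (w n - 2)} with hNdef
  have hmem : m ∈ {n : ℕ | |z.re| ≤ 2 ^ (v2 z) * (w n - 2) ∧ |z.im| ≤ 2 ^ (v2 z) * (w n - 2)} :=
    ⟨le_trans (abs_le_linf z).1 h1, le_trans (abs_le_linf z).2 h1⟩
  have hN : N ≤ m := by rw [hNdef]; exact Nat.sInf_le hmem
  rw [hd]
  split_ifs with h
  · omega
  · rcases lt_or_eq_of_le hN with h' | h'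
    · omega
    · exact absurd (h' ▸ h2) h

lemma of_phi_le (z : GaussianInt) (m : ℕ) (h : phi z ≤ m + 2 * v2 z) :
    linf z ≤ 2 ^ (v2 z) * (w m - 2) ∧ l1 z ≤ 2 ^ (v2 z) * (w (m+1) - 3) := by
  have hd := phi_def z
  set N := sInf {n : ℕ | |z.re| ≤ 2 ^ (v2 z) * (w n - 2) ∧ |z.im| ≤ 2 ^ (v2 z) * (w n - 2)} with hNdef
  have hNmem : N ∈ {n : ℕ | |z.re| ≤ 2 ^ (v2 z) * (w n - 2) ∧ |z.im| ≤ 2 ^ (v2 z) * (w n - 2)} := by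
    rw [hNdef]; exact Nat.sInf_mem (S_mem z)
  have h2p : (0:ℤ) < 2 ^ (v2 z) := by positivity
  have hNle : N ≤ m := by rw [hd] at h; split_ifs at h <;> omega
  have hlinf : linf z ≤ 2 ^ (v2 z) * (w N - 2) := by
    rcases hNmem with ⟨ha, hb⟩
    unfold linf
    exact max_le ha hb
  constructor
  · refine le_trans hlinf ?_
    have := w_mono hNle
    nlinarith
  · rw [hd] at h
    split_ifs at h with hbr
    · refine le_trans hbr ?_
      have := w_mono (Nat.succ_le_succ hNle)
      nlinarith
    · have hN1 : N + 1 ≤ m := by omega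
      have hl1 : l1 z ≤ 2 * linf z := by
        rw [l1_eq]
        have h1 : mm z ≤ linf z := min_le_max
        linarith
      have hw2 : w (N + 2) = 2 * w N := w_add_two _
      have hmono := w_mono (show N + 2 ≤ m + 1 by omega)
      have hA : 2 * linf z ≤ 2 ^ (v2 z) * (w (N+2) - 3) := by rw [hw2]; nlinarith
      have hB : (2:ℤ) ^ (v2 z) * (w (N+2) - 3) ≤ 2 ^ (v2 z) * (w (m+1) - 3) := by nlinarith
      linarith

lemma v2_eq_of (z : GaussianInt) (hz : z ≠ 0) (k : ℕ)
    (hd : (2:ℤ)^k ∣ z.re ∧ (2:ℤ)^k ∣ z.im)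
    (hnd : ¬((2:ℤ)^(k+1) ∣ z.re ∧ (2:ℤ)^(k+1) ∣ z.im)) : v2 z = k := by
  have hg0 : Int.gcd z.re z.im ≠ 0 := by
    rw [Ne, Int.gcd_eq_zero_iff]
    intro ⟨h1, h2⟩
    exact hz (Zsqrtd.ext_iff.mpr ⟨h1, h2⟩)
  have hdvd : (2:ℕ)^k ∣ Int.gcd z.re z.im := by
    have := Int.dvd_coe_gcd hd.1 hd.2
    rwa [show ((2:ℤ)^k) = ((2^k : ℕ) : ℤ) from by push_cast; ring, Int.natCast_dvd_natCast] at this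
  have hndvd : ¬ (2:ℕ)^(k+1) ∣ Int.gcd z.re z.im := by
    intro hcon
    have h1 : ((2^(k+1) : ℕ) : ℤ) ∣ (Int.gcd z.re z.im : ℤ) := Int.natCast_dvd_natCast.2 hcon
    have h2 : ((2^(k+1) : ℕ) : ℤ) = (2:ℤ)^(k+1) := by push_cast; ring
    rw [h2] at h1
    exact hnd ⟨h1.trans (Int.gcd_dvd_left _ _), h1.trans (Int.gcd_dvd_right _ _)⟩
  have hp : Nat.Prime 2 := Nat.prime_two
  unfold v2
  have h1 : k ≤ padicValNat 2 (Int.gcd z.re z.im) := by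
    rw [← Nat.factorization_def _ hp]
    exact (Nat.Prime.pow_dvd_iff_le_factorization hp hg0).1 hdvd
  have h2 : padicValNat 2 (Int.gcd z.re z.im) < k + 1 := by
    by_contra hcon
    push_neg at hcon
    exact hndvd (dvd_trans (pow_dvd_pow 2 hcon) (pow_padicValNat_dvd (p := 2)))
  omega

lemma v2_dvd (z : GaussianInt) : (2:ℤ)^(v2 z) ∣ z.re ∧ (2:ℤ)^(v2 z) ∣ z.im := by
  have h : ((2^(v2 z) : ℕ) : ℤ) ∣ (Int.gcd z.re z.im : ℤ) :=
    Int.natCast_dvd_natCast.2 pow_padicValNat_dvd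
  have h2 : ((2^(v2 z) : ℕ) : ℤ) = (2:ℤ)^(v2 z) := by push_cast; ring
  rw [h2] at h
  exact ⟨h.trans (Int.gcd_dvd_left _ _), h.trans (Int.gcd_dvd_right _ _)⟩

lemma v2_not_dvd (z : GaussianInt) (hz : z ≠ 0) :
    ¬((2:ℤ)^(v2 z + 1) ∣ z.re ∧ (2:ℤ)^(v2 z + 1) ∣ z.im) := by
  intro hcon
  have hg0 : Int.gcd z.re z.im ≠ 0 := by
    rw [Ne, Int.gcd_eq_zero_iff]
    intro ⟨h1, h2⟩
    exact hz (Zsqrtd.ext_iff.mpr ⟨h1, h2⟩)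
  have hdvd : (2:ℕ)^(v2 z + 1) ∣ Int.gcd z.re z.im := by
    have := Int.dvd_coe_gcd hcon.1 hcon.2
    rwa [show ((2:ℤ)^(v2 z + 1)) = ((2^(v2 z + 1) : ℕ) : ℤ) from by push_cast; ring,
      Int.natCast_dvd_natCast] at this
  have hp : Nat.Prime 2 := Nat.prime_two
  have h1 : v2 z + 1 ≤ padicValNat 2 (Int.gcd z.re z.im) := by
    rw [← Nat.factorization_def _ hp]
    exact (Nat.Prime.pow_dvd_iff_le_factorization hp hg0).1 hdvd
  unfold v2 at h1
  omega

lemma uz_cases (z : GaussianInt) : uz z = 1 ∨ uz z = -1 ∨ uz z = Ii ∨ uz z = -Ii := by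
  unfold uz
  split_ifs <;> tauto

lemma Ii_mul (z : GaussianInt) : (Ii * z).re = -z.im ∧ (Ii * z).im = z.re := by
  constructor <;> simp [Ii, Zsqrtd.re_mul, Zsqrtd.im_mul]

lemma neg_Ii_mul (z : GaussianInt) : ((-Ii) * z).re = z.im ∧ ((-Ii) * z).im = -z.re := by
  constructor <;> simp [Ii, Zsqrtd.re_mul, Zsqrtd.im_mul]

lemma uz_spec (z : GaussianInt) (hz : z ≠ 0) :
    (uz z * z).re = linf z ∧ |(uz z * z).im| = mm z := by
  have h0 : ¬(z.re = 0 ∧ z.im = 0) := fun ⟨h1, h2⟩ => hz (Zsqrtd.ext_iff.mpr ⟨h1, h2⟩)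
  unfold uz linf mm
  rcases abs_cases z.re with ⟨e1, e2⟩ | ⟨e1, e2⟩ <;>
    rcases abs_cases z.im with ⟨f1, f2⟩ | ⟨f1, f2⟩ <;>
    split_ifs <;>
    simp only [one_mul, neg_mul, Zsqrtd.re_neg, Zsqrtd.im_neg, (Ii_mul z).1, (Ii_mul z).2,
      (neg_Ii_mul z).1, (neg_Ii_mul z).2, abs_neg] <;>
    rw [e1, f1] <;>
    constructor <;>
    simp only [max_def, min_def] <;>
    split_ifs <;>
    omega

lemma unit_abs (u X : GaussianInt) (hu : u = 1 ∨ u = -1 ∨ u = Ii ∨ u = -Ii) :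
    (|(u*X).re| = |X.re| ∧ |(u*X).im| = |X.im|) ∨
    (|(u*X).re| = |X.im| ∧ |(u*X).im| = |X.re|) := by
  rcases hu with h | h | h | h <;> subst h
  · left; simp
  · left; simp
  · right; rw [(Ii_mul X).1, (Ii_mul X).2, abs_neg]; exact ⟨rfl, rfl⟩
  · right; rw [(neg_Ii_mul X).1, (neg_Ii_mul X).2, abs_neg]; exact ⟨rfl, rfl⟩

lemma star_unit (u : GaussianInt) (hu : u = 1 ∨ u = -1 ∨ u = Ii ∨ u = -Ii) :
    star u = 1 ∨ star u = -1 ∨ star u = Ii ∨ star u = -Ii := by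
  rcases hu with h | h | h | h <;> subst h
  · left; rfl
  · right; left; rfl
  · right; right; right
    ext <;> simp [Ii]
  · right; right; left
    ext <;> simp [Ii]

lemma star_mul_self_uz (z : GaussianInt) : star (uz z) * uz z = 1 := by
  rcases uz_cases z with h | h | h | h <;> rw [h] <;> ext <;>
    simp [Ii, Zsqrtd.re_mul, Zsqrtd.im_mul]

lemma phi_congr (X Y : GaussianInt)
    (h : (|X.re| = |Y.re| ∧ |X.im| = |Y.im|) ∨ (|X.re| = |Y.im| ∧ |X.im| = |Y.re|)) :
    phi X = phi Y := by
  have hgcd : Int.gcd X.re X.im = Int.gcd Y.re Y.im := by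
    rcases h with ⟨h1, h2⟩ | ⟨h1, h2⟩
    · unfold Int.gcd
      rw [← Int.natAbs_abs X.re, ← Int.natAbs_abs X.im, h1, h2, Int.natAbs_abs, Int.natAbs_abs]
    · unfold Int.gcd
      rw [← Int.natAbs_abs X.re, ← Int.natAbs_abs X.im, h1, h2, Int.natAbs_abs, Int.natAbs_abs,
        Nat.gcd_comm]
  have hv2 : v2 X = v2 Y := by unfold v2; rw [hgcd]
  have hl1 : l1 X = l1 Y := by
    unfold l1; rcases h with ⟨h1,h2⟩|⟨h1,h2⟩ <;> rw [h1,h2]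
    exact add_comm _ _
  have hset : {n : ℕ | |X.re| ≤ 2^(v2 Y)*(w n - 2) ∧ |X.im| ≤ 2^(v2 Y)*(w n - 2)}
      = {n : ℕ | |Y.re| ≤ 2^(v2 Y)*(w n - 2) ∧ |Y.im| ≤ 2^(v2 Y)*(w n - 2)} := by
    ext k
    rcases h with ⟨h1,h2⟩|⟨h1,h2⟩
    · rw [Set.mem_setOf_eq, Set.mem_setOf_eq, h1, h2]
    · rw [Set.mem_setOf_eq, Set.mem_setOf_eq, h1, h2, and_comm]
  rw [phi_def, phi_def, hl1, hv2, hset]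

lemma nint_bound (x N : ℤ) (hN : 0 < N) : 2 * |x - nint ((x:ℚ)/(N:ℚ)) * N| ≤ N := by
  have hdiv : N * (x / N) + x % N = x := Int.mul_ediv_add_emod x N
  have he0 : 0 ≤ x % N := Int.emod_nonneg x (ne_of_gt hN)
  have heN : x % N < N := Int.emod_lt_of_pos x hN
  have hNQ : (0:ℚ) < (N:ℚ) := by exact_mod_cast hN
  have hfl : ⌊(x:ℚ)/(N:ℚ)⌋ = x / N := by
    have h := Rat.floor_intCast_div_natCast x N.toNat
    rw [show ((N.toNat : ℕ):ℚ) = (N:ℚ) from by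
          rw [← Int.cast_natCast, Int.toNat_of_nonneg hN.le],
        show (N.toNat : ℤ) = N from Int.toNat_of_nonneg hN.le] at h
    exact h
  have hfrac : (x:ℚ)/(N:ℚ) - (⌊(x:ℚ)/(N:ℚ)⌋ : ℚ) = ((x % N : ℤ) : ℚ) / (N:ℚ) := by
    rw [hfl]
    field_simp
    push_cast
    have : (N:ℚ) * ((x / N : ℤ) : ℚ) + ((x % N : ℤ):ℚ) = (x:ℚ) := by exact_mod_cast congrArg (Int.cast : ℤ → ℚ) hdiv
    linarith
  unfold nint
  rw [hfrac]
  split_ifs with hc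
  · rw [hfl]
    have h2e : 2 * (x % N) ≤ N := by
      have h := (div_le_div_iff₀ hNQ (by norm_num : (0:ℚ) < 2)).1 hc
      have h2 : (x % N) * 2 ≤ 1 * N := by exact_mod_cast h
      linarith
    have hval : x - (x / N) * N = x % N := by
      have h3 : (x/N) * N = N * (x/N) := by ring
      omega
    rw [hval, abs_of_nonneg he0]
    omega
  · push_neg at hc
    have h2e : N < 2 * (x % N) := by
      have h := (div_lt_div_iff₀ (by norm_num : (0:ℚ) < 2) hNQ).1 hc
      have h2 : 1 * N < (x % N) * 2 := by exact_mod_cast h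
      linarith
    have hepos : (0:ℚ) < ((x % N : ℤ):ℚ) / (N:ℚ) := by
      apply div_pos _ hNQ
      exact_mod_cast show (0:ℤ) < x % N by omega
    have hlt1 : ((x % N : ℤ):ℚ) / (N:ℚ) < 1 := by
      rw [div_lt_one hNQ]
      exact_mod_cast heN
    have hcl : ⌈(x:ℚ)/(N:ℚ)⌉ = x / N + 1 := by
      rw [Int.ceil_eq_iff]
      constructor
      · push_cast
        have h' : ((x/N : ℤ):ℚ) < (x:ℚ)/(N:ℚ) := by
          have := hfrac
          rw [hfl] at this
          linarith
        linarith
      · push_cast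
        have := hfrac
        rw [hfl] at this
        linarith
    rw [hcl]
    have hval : x - (x / N + 1) * N = x % N - N := by
      have : (x/N + 1) * N = N * (x/N) + N := by ring
      omega
    rw [hval, abs_of_nonpos (by omega)]
    omega

set_option maxHeartbeats 2000000 in
lemma core (m i j : ℕ) (B β Rl ρ : ℤ)
    (hm1 : 1 ≤ m)
    (hβ1 : 1 ≤ β) (hβB : β ≤ B) (hρ1 : 1 ≤ ρ)
    (hmρ : ρ + β ≤ Rl)
    (hjB : (2:ℤ)^j ∣ B) (hjβ : (2:ℤ)^j ∣ β)
    (hjx : ¬((2:ℤ)^(j+1) ∣ B ∧ (2:ℤ)^(j+1) ∣ β))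
    (hiR : (2:ℤ)^i ∣ Rl) (hiρ : (2:ℤ)^i ∣ ρ)
    (H1 : B ≤ 2^j * (w m - 2))
    (H2 : B + β ≤ 2^j * (w (m+1) - 3))
    (H4 : m + 2*j < 2*i + 1 ∨
          (2*i + 1 ≤ m + 2*j ∧ ((2:ℤ)^i * (w (m + 2*j - 2*i - 1) - 2) < Rl ∨
            (2:ℤ)^i * (w (m + 2*j - 2*i) - 3) < Rl + ρ)))
    (HG1 : 2*(Rl*B - ρ*β) ≤ B^2 + β^2)
    (HG2 : 2*(ρ*B + Rl*β) ≤ B^2 + β^2) :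
    j + 1 ≤ i ∧ 2 ≤ m ∧ Rl + ρ ≤ B ∧
      B - Rl ≤ 2^j * (w (m-1) - 2) ∧ ρ + β ≤ 2^j * (w (m-1) - 2) ∧
      (B - Rl) + (ρ + β) ≤ 2^j * (w m - 3) := by
  have hw1 : w (m+1) = 2 * w (m-1) := by
    have h := w_add_two (m-1); rw [show (m-1)+2 = m+1 from by omega] at h; exact h
  have hwD : w m = w (m-1) + 2^(m/2) := w_D m hm1
  have hw2D : 2 * 2^(m/2) ≤ w (m-1) := w_2D m hm1
  have hDpos : (0:ℤ) < 2^(m/2) := by positivity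
  have hpj : (0:ℤ) < 2^j := by positivity
  have hpi : (0:ℤ) < 2^i := by positivity
  have hB1 : 1 ≤ B := le_trans hβ1 hβB
  have hRl1 : 2 ≤ Rl := by linarith
  -- step helper: strict inequality between multiples of 2^p improves by 2^p
  have hstep : ∀ (p : ℕ) (X M : ℤ), (2:ℤ)^p ∣ X → (2:ℤ)^p ∣ M → M < X → M + 2^p ≤ X := by
    intro p X M h1 h2 h3
    have hd : (2:ℤ)^p ∣ (X - M) := dvd_sub h1 h2
    have := Int.le_of_dvd (by linarith) hd
    linarith
  -- H2 in expanded form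
  have hH2' : B + β ≤ 2*(2^j * w (m-1)) - 3*2^j := by
    have he : (2:ℤ)^j * (2 * w (m-1) - 3) = 2*(2^j * w (m-1)) - 3*2^j := by ring
    rw [hw1, he] at H2
    exact H2
  have hH1' : B ≤ 2^j * w m - 2*2^j := by
    have he : (2:ℤ)^j * (w m - 2) = 2^j * w m - 2*2^j := by ring
    rw [he] at H1
    exact H1
  -- e1 and K, KB
  have e1 : 2*Rl*(B-β) ≤ (B-β)*(B+β) := by
    nlinarith [mul_le_mul_of_nonneg_right (show ρ ≤ Rl - β from by linarith)
      (show (0:ℤ) ≤ β from by linarith)]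
  have hKB : Rl + ρ ≤ B := by
    by_contra hcon
    push_neg at hcon
    nlinarith [mul_le_mul_of_nonneg_right (show B + 1 ≤ Rl + ρ from by linarith)
      (show (0:ℤ) ≤ 2*B from by linarith), e1, HG2]
  have hK : 2 * Rl ≤ B + β := by
    rcases lt_or_eq_of_le hβB with hlt | heq
    · by_contra hcon
      push_neg at hcon
      nlinarith [mul_le_mul_of_nonneg_left (show B+β+1 ≤ 2*Rl from by linarith)
        (show (0:ℤ) ≤ B-β from by linarith), e1]
    · linarith
  -- Step 1 : j + 1 ≤ i
  have hji : j + 1 ≤ i := by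
    by_contra hcon
    push_neg at hcon
    have hij : i ≤ j := by omega
    rcases H4 with hA | ⟨hg, hB4 | hC4⟩
    · omega
    · -- Rl > 2^j * w (m-1) - 2^(i+1)
      have hidx : m + 2*j - 2*i - 1 = (m-1) + 2*(j-i) := by omega
      rw [hidx, w_shift] at hB4
      have hpow : (2:ℤ)^i * 2^(j-i) = 2^j := by rw [← pow_add]; congr 1; omega
      have hB4' : 2^j * w (m-1) - 2*2^i < Rl := by
        have he : (2:ℤ)^i * (2^(j-i) * w (m-1) - 2) = (2^i * 2^(j-i)) * w (m-1) - 2*2^i := by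
          ring
        rw [he, hpow] at hB4
        exact hB4
      rcases lt_or_eq_of_le hij with hlt | heq
      · have hpow2 : (2:ℤ)^i * 2 ≤ 2^j := by
          calc (2:ℤ)^i * 2 = 2^(i+1) := by rw [pow_succ]
          _ ≤ 2^j := pow_le_pow_right₀ (by norm_num) (by omega)
        linarith
      · -- i = j
        subst heq
        have hRlge : 2^i * w (m-1) - 2*2^i + 2^i ≤ Rl := by
          apply hstep i Rl _ hiR _ hB4'
          exact dvd_sub (Dvd.dvd.mul_right (dvd_refl _) _) (Dvd.dvd.mul_left (dvd_refl _) 2)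
        linarith
    · -- Rl + ρ > 2^j * w m - 3*2^i
      have hidx : m + 2*j - 2*i = m + 2*(j-i) := by omega
      rw [hidx, w_shift] at hC4
      have hpow : (2:ℤ)^i * 2^(j-i) = 2^j := by rw [← pow_add]; congr 1; omega
      have hC4' : 2^j * w m - 3*2^i < Rl + ρ := by
        have he : (2:ℤ)^i * (2^(j-i) * w m - 3) = (2^i * 2^(j-i)) * w m - 3*2^i := by ring
        rw [he, hpow] at hC4
        exact hC4
      rcases lt_or_eq_of_le hij with hlt | heq
      · have hpow2 : (2:ℤ)^i * 4 ≤ 2^j * 2 := by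
          calc (2:ℤ)^i * 4 = 2^(i+2) := by rw [pow_add]; ring
          _ ≤ 2^(j+1) := pow_le_pow_right₀ (by norm_num) (by omega)
          _ = 2^j * 2 := by rw [pow_succ]
        linarith
      · -- i = j : parity contradiction
        subst heq
        have hxge : 2^i * w m - 3*2^i + 2^i ≤ Rl + ρ := by
          apply hstep i _ _ (dvd_add hiR hiρ) _ hC4'
          exact dvd_sub (Dvd.dvd.mul_right (dvd_refl _) _) (Dvd.dvd.mul_left (dvd_refl _) 3)
        -- Rl + ρ = B = 2^i (w m - 2), 2 Rl = B + β
        have hx1 : Rl + ρ = 2^i * w m - 2*2^i := by linarith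
        have hBeq : B = 2^i * w m - 2*2^i := by linarith
        have h2Rl : 2 * Rl = B + β := by linarith
        -- parity
        obtain ⟨b2, hb2⟩ := hjB
        obtain ⟨c2, hc2⟩ := hjβ
        obtain ⟨r2, hr2⟩ := hiR
        have hwme : (2:ℤ) ∣ w m := w_even_val m hm1
        obtain ⟨w2, hw2⟩ := hwme
        have hb2e : (2:ℤ) ∣ b2 := by
          have : (2:ℤ)^i * b2 = 2^i * (2*w2 - 2) := by rw [← hb2, hBeq, hw2]; ring
          have hb2' : b2 = 2*w2 - 2 := by
            have := mul_left_cancel₀ (ne_of_gt hpi) this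
            linarith
          exact ⟨w2 - 1, by omega⟩
        have hc2o : ¬ (2:ℤ) ∣ c2 := by
          intro hdc
          apply hjx
          obtain ⟨b3, hb3⟩ := hb2e
          obtain ⟨c3, hc3⟩ := hdc
          constructor
          · exact ⟨b3, by rw [hb2, hb3, pow_succ]; ring⟩
          · exact ⟨c3, by rw [hc2, hc3, pow_succ]; ring⟩
        -- 2 r2 = b2 + c2 : odd = even
        have : 2^i * (2*r2) = 2^i * (b2 + c2) := by
          rw [show (2:ℤ)^i * (2*r2) = 2*(2^i*r2) from by ring, ← hr2]
          rw [h2Rl, hb2, hc2]; ring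
        have h22 : 2*r2 = b2 + c2 := mul_left_cancel₀ (ne_of_gt hpi) this
        exact hc2o ⟨r2 - b2/2 , by omega⟩
  -- consequences of j+1 ≤ i
  have hj1R : (2:ℤ)^(j+1) ∣ Rl := dvd_trans (pow_dvd_pow 2 hji) hiR
  have hj1ρ : (2:ℤ)^(j+1) ∣ ρ := dvd_trans (pow_dvd_pow 2 hji) hiρ
  have hjR : (2:ℤ)^j ∣ Rl := dvd_trans (pow_dvd_pow 2 (by omega)) hiR
  have hjρ : (2:ℤ)^j ∣ ρ := dvd_trans (pow_dvd_pow 2 (by omega)) hiρ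
  -- m ≥ 2
  have hm2 : 2 ≤ m := by
    by_contra hcon
    have hmeq : m = 1 := by omega
    subst hmeq
    have hw0 : w 0 = 3 := by have := w_even 0; simpa using this
    rw [show (1:ℕ) - 1 = 0 from rfl, hw0] at hH2'
    have hRl2 : (2:ℤ)^(j+1) ≤ Rl := Int.le_of_dvd (by linarith) hj1R
    rw [pow_succ] at hRl2
    linarith
  -- C1b
  have hWe : (2:ℤ) ∣ w (m-1) := w_even_val (m-1) (by omega)
  obtain ⟨W2, hW2⟩ := hWe
  have hRlW : Rl ≤ 2^j * w (m-1) - 2*2^j := by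
    have hlt : Rl < 2^j * w (m-1) := by linarith
    have hd : (2:ℤ)^(j+1) ∣ 2^j * w (m-1) := ⟨W2, by rw [hW2, pow_succ]; ring⟩
    have hs := hstep (j+1) _ _ hd hj1R hlt
    rw [pow_succ] at hs
    linarith
  have C1b : ρ + β ≤ 2^j * (w (m-1) - 2) := by
    have he : (2:ℤ)^j * (w (m-1) - 2) = 2^j * w (m-1) - 2*2^j := by ring
    linarith
  -- C2
  have C2 : (B - Rl) + (ρ + β) ≤ 2^j * (w m - 3) := by
    have hdL : (2:ℤ)^j ∣ (B - Rl + (ρ + β)) :=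
      dvd_add (dvd_sub hjB hjR) (dvd_add hjρ hjβ)
    have hdH : (2:ℤ)^j ∣ 2^j * (w m - 2) := Dvd.dvd.mul_right (dvd_refl _) _
    have hne : B - Rl + (ρ + β) ≠ 2^j * (w m - 2) := by
      intro heq
      have hBe : B = 2^j * (w m - 2) := le_antisymm H1 (by linarith)
      have hReq : Rl = ρ + β := by linarith
      apply hjx
      constructor
      · obtain ⟨w2, hw2⟩ := w_even_val m (by omega)
        exact ⟨w2 - 1, by rw [hBe, hw2, pow_succ]; ring⟩
      · have hd2 : (2:ℤ)^(j+1) ∣ (ρ + β) := hReq ▸ hj1R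
        obtain ⟨u, hu⟩ := hd2
        obtain ⟨v, hv⟩ := hj1ρ
        exact ⟨u - v, by rw [mul_sub, ← hu, ← hv]; ring⟩
    have hlt : B - Rl + (ρ + β) < 2^j * (w m - 2) := lt_of_le_of_ne (by linarith) hne
    have hs := hstep j _ _ hdH hdL hlt
    have he : (2:ℤ)^j * (w m - 3) = 2^j * (w m - 2) - 2^j := by ring
    linarith
  -- C1a via Rl ≥ 2^j * 2^(m/2)
  have hRlD : 2^j * 2^(m/2) ≤ Rl := by
    rcases le_or_gt (m/2) (i - j) with hcase | hcase
    · have h1 : (2:ℤ)^(j + m/2) ≤ 2^i := pow_le_pow_right₀ (by norm_num) (by omega)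
      have h2 : (2:ℤ)^i ≤ Rl := Int.le_of_dvd (by linarith) hiR
      have h3 : (2:ℤ)^(j + m/2) = 2^j * 2^(m/2) := pow_add 2 j (m/2)
      linarith
    · have hD2 : (2:ℤ)^(i-j+1) ≤ 2^(m/2) := pow_le_pow_right₀ (by norm_num) (by omega)
      have h2i1 : (2:ℤ)^j * 2^(i-j+1) = 2*2^i := by
        rw [← pow_add, show j + (i-j+1) = i+1 from by omega, pow_succ]; ring
      have hWD : 2^j*(2*2^(m/2)) ≤ 2^j * w (m-1) :=
        mul_le_mul_of_nonneg_left hw2D (by positivity)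
      have hDle : (2:ℤ)^j * 2^(i-j+1) ≤ 2^j * 2^(m/2) :=
        mul_le_mul_of_nonneg_left hD2 (by positivity)
      rcases H4 with hA | ⟨hg, hB4 | hC4⟩
      · exfalso
        omega
      · have hws : (2:ℤ)^(i-j) * w (m+2*j-2*i-1) = w (m-1) := by
          rw [← w_shift]; congr 1; omega
        have hpp : (2:ℤ)^j * 2^(i-j) = 2^i := by rw [← pow_add]; congr 1; omega
        have he : (2:ℤ)^j * w (m-1) = 2^i * w (m+2*j-2*i-1) := by
          rw [← hws, ← mul_assoc, hpp]
        have he2 : (2:ℤ)^i * (w (m+2*j-2*i-1) - 2) = 2^i * w (m+2*j-2*i-1) - 2*2^i := by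
          ring
        -- Rl > 2^j w(m-1) - 2*2^i ≥ 2^j*2D - 2^jD = 2^jD
        linarith
      · have hws : (2:ℤ)^(i-j) * w (m+2*j-2*i) = w m := by
          rw [← w_shift]; congr 1; omega
        have hpp : (2:ℤ)^j * 2^(i-j) = 2^i := by rw [← pow_add]; congr 1; omega
        have he : (2:ℤ)^j * w m = 2^i * w (m+2*j-2*i) := by
          rw [← hws, ← mul_assoc, hpp]
        have he2 : (2:ℤ)^i * (w (m+2*j-2*i) - 3) = 2^i * w (m+2*j-2*i) - 3*2^i := by ring
        have h2Rl : 2^j * w m - 3*2^i < 2*Rl := by linarith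
        have hwm : (2:ℤ)^j * w m = 2^j * w (m-1) + 2^j * 2^(m/2) := by rw [hwD]; ring
        rcases lt_or_eq_of_le (show i-j+1 ≤ m/2 from by omega) with hlt2 | heq2
        · have hD4 : (2:ℤ)^(i-j+2) ≤ 2^(m/2) := pow_le_pow_right₀ (by norm_num) (by omega)
          have h4i : (2:ℤ)^j * 2^(i-j+2) = 4*2^i := by
            rw [← pow_add, show j + (i-j+2) = i+2 from by omega, pow_add]; ring
          have hDle4 : (2:ℤ)^j * 2^(i-j+2) ≤ 2^j * 2^(m/2) :=
            mul_le_mul_of_nonneg_left hD4 (by positivity)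
          -- 12*2^i ≤ 3*(2^j D); 8Rl > 4*2^jW + 4*2^jD - 12*2^i ≥ 8*2^jD + 2^jD
          linarith
        · -- 2^(m/2) = 2^(i-j+1), so 2^j D = 2*2^i
          have h2jD : (2:ℤ)^j * 2^(m/2) = 2*2^i := by rw [← heq2]; exact h2i1
          have hRgt : (2:ℤ)^i < Rl := by linarith
          have hs := hstep i Rl (2^i) hiR (dvd_refl _) hRgt
          linarith
  have C1a : B - Rl ≤ 2^j * (w (m-1) - 2) := by
    have he : (2:ℤ)^j * (w m - 2) = 2^j * w (m-1) + 2^j*2^(m/2) - 2*2^j := by rw [hwD]; ring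
    have he2 : (2:ℤ)^j * (w (m-1) - 2) = 2^j * w (m-1) - 2*2^j := by ring
    linarith
  exact ⟨hji, hm2, hKB, C1a, C1b, C2⟩

lemma linf_mm_sq (z : GaussianInt) : linf z^2 + mm z^2 = z.re^2 + z.im^2 := by
  unfold linf mm
  rcases le_total |z.re| |z.im| with h | h
  · rw [max_eq_right h, min_eq_left h, sq_abs, sq_abs]; try ring
  · rw [max_eq_left h, min_eq_right h, sq_abs, sq_abs]; try ring

lemma dvd_linf_mm (z : GaussianInt) (x : ℤ) (h1 : x ∣ z.re) (h2 : x ∣ z.im) :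
    x ∣ linf z ∧ x ∣ mm z := by
  unfold linf mm
  rcases le_total |z.re| |z.im| with h | h
  · rw [max_eq_right h, min_eq_left h]
    exact ⟨(dvd_abs _ _).2 h2, (dvd_abs _ _).2 h1⟩
  · rw [max_eq_left h, min_eq_right h]
    exact ⟨(dvd_abs _ _).2 h1, (dvd_abs _ _).2 h2⟩

lemma coords_dvd_of_linf_mm (z : GaussianInt) (x : ℤ) (h1 : x ∣ linf z) (h2 : x ∣ mm z) :
    x ∣ z.re ∧ x ∣ z.im := by
  unfold linf at h1
  unfold mm at h2
  rcases le_total |z.re| |z.im| with h | h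
  · rw [max_eq_right h] at h1
    rw [min_eq_left h] at h2
    exact ⟨(dvd_abs _ _).1 h2, (dvd_abs _ _).1 h1⟩
  · rw [max_eq_left h] at h1
    rw [min_eq_right h] at h2
    exact ⟨(dvd_abs _ _).1 h1, (dvd_abs _ _).1 h2⟩

set_option maxHeartbeats 2000000 in
theorem stmt18 (a b r : GaussianInt) (n : ℕ) (ha : a ≠ 0) (hb : b ≠ 0) (hr : r = gr a b)
    (hr0 : r ≠ 0) (hphi : phi r ≥ phi b) (hn : phi b = n)
    (him : (uz b * b).im * (uz r * r).im < 0)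
    (hm : mm r + mm b ≤ linf r) :
    phi (r - uz b * star (uz r) * b) < phi b := by
  obtain ⟨hcre, hcim⟩ := uz_spec b hb
  obtain ⟨hsre, hsim⟩ := uz_spec r hr0
  -- positivity of min parts
  have hβ1 : 1 ≤ mm b := by
    have h0 : (uz b * b).im ≠ 0 := by
      intro h0; rw [h0] at him; simp at him
    have := abs_pos.mpr h0
    linarith [hcim ▸ this]
  have hρ1 : 1 ≤ mm r := by
    have h0 : (uz r * r).im ≠ 0 := by
      intro h0; rw [h0] at him; simp at him
    have := abs_pos.mpr h0
    linarith [hsim ▸ this]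
  have hβB : mm b ≤ linf b := min_le_max
  have hρR : mm r ≤ linf r := min_le_max
  -- norm positivity
  have hNb : (0:ℤ) < b.re^2 + b.im^2 := by
    have h1 : b.re ≠ 0 ∨ b.im ≠ 0 := by
      by_contra h; push_neg at h
      exact hb (Zsqrtd.ext_iff.mpr ⟨h.1, h.2⟩)
    rcases h1 with h | h
    · nlinarith [Int.one_le_abs h, sq_abs b.re, abs_nonneg b.re, sq_nonneg b.im]
    · nlinarith [Int.one_le_abs h, sq_abs b.im, abs_nonneg b.im, sq_nonneg b.re]
  -- Gauss rounding bounds on r * star b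
  have hrb_re : 2 * |(r * star b).re| ≤ b.re^2 + b.im^2 := by
    have hval : (r * star b).re = (a.re*b.re + a.im*b.im) -
        nint (((a.re * b.re + a.im * b.im : ℤ) : ℚ) / ((b.re ^ 2 + b.im ^ 2 : ℤ) : ℚ)) *
          (b.re^2+b.im^2) := by
      rw [hr]
      simp only [gr, gq, Zsqrtd.re_sub, Zsqrtd.im_sub, Zsqrtd.re_mul, Zsqrtd.im_mul,
        Zsqrtd.re_star, Zsqrtd.im_star]
      ring
    rw [hval]
    exact nint_bound _ _ hNb
  have hrb_im : 2 * |(r * star b).im| ≤ b.re^2 + b.im^2 := by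
    have hval : (r * star b).im = (a.im*b.re - a.re*b.im) -
        nint (((a.im * b.re - a.re * b.im : ℤ) : ℚ) / ((b.re ^ 2 + b.im ^ 2 : ℤ) : ℚ)) *
          (b.re^2+b.im^2) := by
      rw [hr]
      simp only [gr, gq, Zsqrtd.re_sub, Zsqrtd.im_sub, Zsqrtd.re_mul, Zsqrtd.im_mul,
        Zsqrtd.re_star, Zsqrtd.im_star]
      ring
    rw [hval]
    exact nint_bound _ _ hNb
  -- transfer bounds to (uz r * r) * star (uz b * b)
  have hmulsc : (uz r * r) * star (uz b * b) =
      uz r * (star (uz b) * (r * star b)) := by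
    rw [star_mul]
    ring
  have hsc_bounds : 2 * |((uz r * r) * star (uz b * b)).re| ≤ b.re^2 + b.im^2 ∧
      2 * |((uz r * r) * star (uz b * b)).im| ≤ b.re^2 + b.im^2 := by
    rw [hmulsc]
    have h1 := unit_abs (star (uz b)) (r * star b) (star_unit _ (uz_cases b))
    have h2 := unit_abs (uz r) (star (uz b) * (r * star b)) (uz_cases r)
    rcases h2 with ⟨ha2, hb2⟩ | ⟨ha2, hb2⟩ <;> rw [ha2, hb2] <;>
      rcases h1 with ⟨hc2, hd2⟩ | ⟨hc2, hd2⟩ <;> rw [hc2, hd2] <;>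
      first
      | exact ⟨hrb_re, hrb_im⟩
      | exact ⟨hrb_im, hrb_re⟩
  -- sign analysis
  have hsigns : ((uz r * r).im = mm r ∧ (uz b * b).im = -(mm b)) ∨
      ((uz r * r).im = -(mm r) ∧ (uz b * b).im = mm b) := by
    rcases (abs_eq (mm_nonneg r)).1 hsim with h1 | h1 <;>
      rcases (abs_eq (mm_nonneg b)).1 hcim with h2 | h2
    · exfalso; rw [h1, h2] at him; nlinarith
    · exact Or.inl ⟨h1, h2⟩
    · exact Or.inr ⟨h1, h2⟩
    · exfalso; rw [h1, h2] at him; nlinarith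
  -- coordinates of the product
  have hscre_val : ((uz r * r) * star (uz b * b)).re =
      linf r * linf b + (uz r * r).im * (uz b * b).im := by
    rw [Zsqrtd.re_mul, Zsqrtd.re_star, Zsqrtd.im_star, hsre, hcre]
    ring
  have hscim_val : ((uz r * r) * star (uz b * b)).im =
      (uz r * r).im * linf b - linf r * (uz b * b).im := by
    rw [Zsqrtd.im_mul, Zsqrtd.re_star, Zsqrtd.im_star, hsre, hcre]
    ring
  -- G1 and G2
  have hNeq := linf_mm_sq b
  have G1 : 2*(linf r * linf b - mm r * mm b) ≤ linf b^2 + mm b^2 := by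
    rw [hNeq]
    have him_val : (uz r * r).im * (uz b * b).im = -(mm r * mm b) := by
      rcases hsigns with ⟨h1,h2⟩|⟨h1,h2⟩ <;> rw [h1,h2] <;> ring
    have h := hsc_bounds.1
    rw [hscre_val, him_val] at h
    have h2 := le_abs_self (linf r * linf b + -(mm r * mm b))
    linarith
  have G2 : 2*(mm r * linf b + linf r * mm b) ≤ linf b^2 + mm b^2 := by
    rw [hNeq]
    have h := hsc_bounds.2
    rw [hscim_val] at h
    rcases hsigns with ⟨h1,h2⟩|⟨h1,h2⟩
    · rw [h1, h2] at h
      have heq : mm r * linf b - linf r * -(mm b) = mm r * linf b + linf r * mm b := by ring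
      rw [heq] at h
      linarith [le_abs_self (mm r * linf b + linf r * mm b)]
    · rw [h1, h2] at h
      have heq : -(mm r) * linf b - linf r * mm b = -(mm r * linf b + linf r * mm b) := by ring
      rw [heq, abs_neg] at h
      linarith [le_abs_self (mm r * linf b + linf r * mm b)]
  -- dvd facts
  have hjco := v2_dvd b
  have hico := v2_dvd r
  have hjlm := dvd_linf_mm b _ hjco.1 hjco.2
  have hilm := dvd_linf_mm r _ hico.1 hico.2
  have hjx : ¬((2:ℤ)^(v2 b + 1) ∣ linf b ∧ (2:ℤ)^(v2 b + 1) ∣ mm b) := by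
    intro ⟨h1, h2⟩
    obtain ⟨hc1, hc2⟩ := coords_dvd_of_linf_mm b _ h1 h2
    exact v2_not_dvd b hb ⟨hc1, hc2⟩
  -- n ≥ 2 * v2 b + 1
  have hlinfb1 : 1 ≤ linf b := le_trans hβ1 hβB
  have hn2j : 2 * v2 b + 1 ≤ n := by
    have h0 := le_phi0 b
    rcases lt_or_eq_of_le (show 2 * v2 b ≤ n from by omega) with h | h
    · omega
    · exfalso
      obtain ⟨hA, hB⟩ := of_phi_le b 0 (by omega)
      have hw0 : w 0 = 3 := by have := w_even 0; simpa using this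
      have hw1 : w 1 = 4 := by have := w_odd 0; simpa using this
      rw [hw0] at hA
      rw [hw1] at hB
      rw [l1_eq] at hB
      have hdvd : (2:ℤ)^(v2 b) ∣ linf b := hjlm.1
      have hge : (2:ℤ)^(v2 b) ≤ linf b := Int.le_of_dvd (by linarith) hdvd
      have : (2:ℤ)^(v2 b) * (3-2) = 2^(v2 b) := by ring
      have : (2:ℤ)^(v2 b) * (4-3) = 2^(v2 b) := by ring
      nlinarith
  -- H1 H2
  obtain ⟨H1, H2⟩ := of_phi_le b (n - 2 * v2 b) (by omega)
  rw [l1_eq] at H2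
  -- H4
  have H4 : (n - 2 * v2 b) + 2*(v2 b) < 2*(v2 r) + 1 ∨
      (2*(v2 r) + 1 ≤ (n - 2 * v2 b) + 2*(v2 b) ∧
        ((2:ℤ)^(v2 r) * (w ((n - 2 * v2 b) + 2*(v2 b) - 2*(v2 r) - 1) - 2) < linf r ∨
         (2:ℤ)^(v2 r) * (w ((n - 2 * v2 b) + 2*(v2 b) - 2*(v2 r)) - 3) < linf r + mm r)) := by
    by_cases hcase : n ≤ 2 * v2 r
    · left; omega
    · right
      refine ⟨by omega, ?_⟩
      by_contra hcon
      push_neg at hcon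
      obtain ⟨h1', h2'⟩ := hcon
      have hidx1 : (n - 2 * v2 b) + 2*(v2 b) - 2*(v2 r) - 1 = n - 2*(v2 r) - 1 := by omega
      have hidx2 : (n - 2 * v2 b) + 2*(v2 b) - 2*(v2 r) = (n - 2*(v2 r) - 1) + 1 := by omega
      rw [hidx1] at h1'
      rw [hidx2] at h2'
      have hl1r : l1 r ≤ 2^(v2 r) * (w ((n - 2*(v2 r) - 1) + 1) - 3) := by
        rw [l1_eq]; exact h2'
      have := phi_le r (n - 2*(v2 r) - 1) h1' hl1r
      omega
  -- apply core
  obtain ⟨hji, hm2, hKB, C1a, C1b, C2⟩ :=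
    core (n - 2 * v2 b) (v2 r) (v2 b) (linf b) (mm b) (linf r) (mm r)
      (by omega) hβ1 hβB hρ1 hm hjlm.1 hjlm.2 hjx hilm.1 hilm.2 H1 H2 H4 G1 G2
  -- rewrite the target
  have hd_eq : r - uz b * star (uz r) * b = star (uz r) * (uz r * r - uz b * b) := by
    have h1 := star_mul_self_uz r
    linear_combination (-r) * h1
  have hphid : phi (r - uz b * star (uz r) * b) = phi (uz r * r - uz b * b) := by
    rw [hd_eq]
    exact phi_congr _ _ (unit_abs _ _ (star_unit _ (uz_cases r)))
  -- coordinates of the difference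
  have hdre : (uz r * r - uz b * b).re = linf r - linf b := by
    rw [Zsqrtd.re_sub, hsre, hcre]
  have habs_re : |(uz r * r - uz b * b).re| = linf b - linf r := by
    rw [hdre, abs_of_nonpos (by linarith)]
    ring
  have hdim : (uz r * r - uz b * b).im = (mm r + mm b) ∨
      (uz r * r - uz b * b).im = -(mm r + mm b) := by
    rcases hsigns with ⟨h1,h2⟩|⟨h1,h2⟩
    · left; rw [Zsqrtd.im_sub, h1, h2]; ring
    · right; rw [Zsqrtd.im_sub, h1, h2]; ring
  have habs_im : |(uz r * r - uz b * b).im| = mm r + mm b := by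
    rcases hdim with h | h
    · rw [h, abs_of_nonneg (by linarith)]
    · rw [h, abs_neg, abs_of_nonneg (by linarith)]
  have hd0 : uz r * r - uz b * b ≠ 0 := by
    intro h0
    have him0 : (uz r * r - uz b * b).im = 0 := by rw [h0]; rfl
    rw [him0] at habs_im
    simp at habs_im
    linarith
  -- dvd of coordinates of difference
  have hj1R : (2:ℤ)^(v2 b + 1) ∣ linf r :=
    dvd_trans (pow_dvd_pow 2 hji) hilm.1
  have hj1ρ : (2:ℤ)^(v2 b + 1) ∣ mm r :=
    dvd_trans (pow_dvd_pow 2 hji) hilm.2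
  have hjR : (2:ℤ)^(v2 b) ∣ linf r := dvd_trans (pow_dvd_pow 2 (by omega)) hilm.1
  have hjρ : (2:ℤ)^(v2 b) ∣ mm r := dvd_trans (pow_dvd_pow 2 (by omega)) hilm.2
  have hv2d : v2 (uz r * r - uz b * b) = v2 b := by
    apply v2_eq_of _ hd0
    · constructor
      · rw [hdre]
        exact dvd_sub hjR hjlm.1
      · rcases hdim with h | h <;> rw [h]
        · exact dvd_add hjρ hjlm.2
        · exact Dvd.dvd.neg_right (dvd_add hjρ hjlm.2)
    · intro ⟨hA, hB⟩
      rw [hdre] at hA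
      have hdB : (2:ℤ)^(v2 b + 1) ∣ linf b := by
        have := dvd_sub hj1R hA
        simpa using this
      have hdβ : (2:ℤ)^(v2 b + 1) ∣ mm b := by
        have hsum : (2:ℤ)^(v2 b + 1) ∣ (mm r + mm b) := by
          rcases hdim with h | h
          · rw [h] at hB; exact hB
          · rw [h] at hB; exact (dvd_neg.mp hB)
        have := dvd_sub hsum hj1ρ
        simpa using this
      exact hjx ⟨hdB, hdβ⟩
  -- final bound
  have hfinal : phi (uz r * r - uz b * b) ≤ (n - 2 * v2 b - 1) + 2 * v2 (uz r * r - uz b * b) := by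
    apply phi_le
    · rw [hv2d]
      unfold linf
      rw [habs_re, habs_im]
      apply max_le
      · have : n - 2 * v2 b - 1 = (n - 2 * v2 b) - 1 := rfl
        exact le_trans (le_of_eq (by ring)) C1a
      · exact le_trans (le_of_eq (by ring)) C1b
    · rw [hv2d]
      unfold l1
      rw [habs_re, habs_im]
      rw [show (n - 2 * v2 b - 1) + 1 = n - 2 * v2 b from by omega]
      exact le_trans (le_of_eq (by ring)) C2
  rw [hphid, hn]
  rw [hv2d] at hfinal
  omega
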